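/- Let q ∈ [q_1, q_3], where q_1, q_3 are the roots in (1,2) of x^6 - x^4 - x^3 - 2x^2 - x - 1 and x^5 - x^4 - x^3 - x + 1 respectively. With y_j = Π(0 1^j (10)^∞), one has y_j ≤ (1+q^3)/(q^4-1) for 1 ≤ j ≤ 3, and y_j > (1+q^3)/(q^4-1) for all j ≥ 4. -/

import Mathlib

/-- `y q j = Π(0 1^j (10)^∞)`: digit 0, then j ones, then (10) repeated. -/
noncomputable def yExp (q : ℝ) (j : ℕ) : ℝ :=
  ∑' i : ℕ, (if i = 0 then (0:ℝ) else if i ≤ j then 1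
    else if (i - (j + 1)) % 2 = 0 then 1 else 0) / q ^ (i + 1)

/-- `z q j = Π(1 0^j (01)^∞)`: digit 1, then j zeros, then (01) repeated. -/
noncomputable def zExp (q : ℝ) (j : ℕ) : ℝ :=
  ∑' i : ℕ, (if i = 0 then (1:ℝ) else if i ≤ j then 0
    else if (i - (j + 1)) % 2 = 0 then 0 else 1) / q ^ (i + 1)

lemma yExp_closed (q : ℝ) (hq : 1 < q) (j : ℕ) :
    yExp q j = (∑ i ∈ Finset.Icc 1 j, (1/q) ^ (i+1)) + (1/q)^(j+2) / (1 - (1/q)^2) := by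
  set r : ℝ := 1/q with hrdef
  have hq0 : 0 < q := by linarith
  have hr0 : 0 < r := by positivity
  have hr1 : r < 1 := by rw [hrdef, div_lt_one hq0]; linarith
  have hr2 : r^2 < 1 := by nlinarith
  set g : ℕ → ℝ := fun i => if i ∈ Finset.Icc 1 j then r^(i+1) else 0 with hg
  have hgsum : HasSum g (∑ i ∈ Finset.Icc 1 j, r^(i+1)) := by
    have h1 : HasSum g (∑ i ∈ Finset.Icc 1 j, g i) :=
      hasSum_sum_of_ne_finset_zero (by intro b hb; simp only [hg, if_neg hb])
    have h2 : ∑ i ∈ Finset.Icc 1 j, g i = ∑ i ∈ Finset.Icc 1 j, r^(i+1) :=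
      Finset.sum_congr rfl (fun i hi => by simp only [hg, if_pos hi])
    rwa [h2] at h1
  set h : ℕ → ℝ := fun i => if j + 1 ≤ i ∧ (i - (j+1)) % 2 = 0 then r^(i+1) else 0 with hh
  have hhsum : HasSum h (r^(j+2) / (1 - r^2)) := by
    have he : Function.Injective (fun k : ℕ => j + 1 + 2 * k) := by
      intro a b hab; simpa using hab
    have hvanish : ∀ x, x ∉ Set.range (fun k : ℕ => j + 1 + 2 * k) → h x = 0 := by
      intro x hx
      simp only [hh, ite_eq_right_iff]
      rintro ⟨h1, h2⟩
      exfalso; apply hx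
      refine ⟨(x - (j+1))/2, ?_⟩
      show j + 1 + 2 * ((x - (j+1))/2) = x
      omega
    rw [← Function.Injective.hasSum_iff he hvanish]
    have : (h ∘ fun k : ℕ => j + 1 + 2 * k) = fun k : ℕ => r^(j+2) * (r^2)^k := by
      funext k
      simp only [Function.comp, hh]
      rw [if_pos ⟨by omega, by omega⟩, ← pow_mul, ← pow_add]
      ring_nf
    rw [this]
    have := (hasSum_geometric_of_lt_one (by positivity) hr2).mul_left (r^(j+2))
    simpa [div_eq_mul_inv] using this
  have hfg : (fun i : ℕ => (if i = 0 then (0:ℝ) else if i ≤ j then 1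
      else if (i - (j + 1)) % 2 = 0 then 1 else 0) / q ^ (i + 1)) = fun i => g i + h i := by
    funext i
    have hpow : (1:ℝ) / q ^ (i+1) = r^(i+1) := by
      rw [hrdef, div_pow, one_pow]
    rcases Nat.eq_zero_or_pos i with h0 | h0
    · subst h0; simp [hg, hh]
    simp only [hg, hh, Finset.mem_Icc]
    rcases le_or_gt i j with hij | hij
    · rw [if_neg (by omega : ¬ i = 0), if_pos hij, if_pos (⟨by omega, hij⟩ : 1 ≤ i ∧ i ≤ j),
        if_neg (by omega : ¬ (j + 1 ≤ i ∧ (i - (j+1)) % 2 = 0)), add_zero]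
      exact hpow
    · by_cases hpar : (i - (j+1)) % 2 = 0
      · rw [if_neg (by omega : ¬ i = 0), if_neg (by omega : ¬ i ≤ j), if_pos hpar,
          if_neg (by omega : ¬ (1 ≤ i ∧ i ≤ j)),
          if_pos (⟨by omega, hpar⟩ : j + 1 ≤ i ∧ (i - (j+1)) % 2 = 0), zero_add]
        exact hpow
      · rw [if_neg (by omega : ¬ i = 0), if_neg (by omega : ¬ i ≤ j), if_neg hpar,
          if_neg (by omega : ¬ (1 ≤ i ∧ i ≤ j)), if_neg (by tauto)]
        simp
  rw [yExp, hfg]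
  exact (hgsum.add hhsum).tsum_eq

lemma yExp_mono (q : ℝ) (hq : 1 < q) (j : ℕ) : yExp q j < yExp q (j+1) := by
  rw [yExp_closed q hq j, yExp_closed q hq (j+1)]
  set r : ℝ := 1/q with hrdef
  have hq0 : 0 < q := by linarith
  have hr0 : 0 < r := by positivity
  have hr1 : r < 1 := by rw [hrdef, div_lt_one hq0]; linarith
  have h2 : 0 < 1 - r^2 := by nlinarith
  rw [Finset.sum_Icc_succ_top (by omega : 1 ≤ j + 1)]
  have hs : 0 < r^(j+2) := by positivity
  have key : r^(j+2)/(1-r^2) < r^(j+1+1) + r^(j+1+2)/(1-r^2) := by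
    have hjj : r^(j+1+1) = r^(j+2) := by ring_nf
    have hjj2 : r^(j+1+2) = r^(j+2) * r := by ring
    rw [hjj, hjj2, div_lt_iff₀ h2, add_mul, div_mul_cancel₀ _ (ne_of_gt h2)]
    nlinarith [mul_pos hs (show 0 < r - r^2 by nlinarith)]
  linarith

lemma p1_nonneg_aux (a b : ℝ) (ha : 1.5 ≤ a) (hab : a ≤ b) (hb : b ≤ 1.69)
    (hpa : a^6 - a^4 - a^3 - 2*a^2 - a - 1 = 0) :
    0 ≤ b^6 - b^4 - b^3 - 2*b^2 - b - 1 := by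
  have h1 : (0:ℝ) ≤ a - 1.5 := by linarith
  have h2 : (0:ℝ) ≤ 1.69 - b := by linarith
  have h3 : (0:ℝ) ≤ b - a := by linarith
  have ha0 : (0:ℝ) ≤ a := by linarith
  have hb0 : (0:ℝ) ≤ b := by linarith
  have hS : 0 < (b^5+b^4*a+b^3*a^2+b^2*a^3+b*a^4+a^5) - (b^3+b^2*a+b*a^2+a^3)
      - (b^2+a*b+a^2) - 2*(b+a) - 1 := by
    nlinarith [mul_nonneg h1 h2, mul_nonneg (mul_nonneg h1 h2) (mul_nonneg ha0 hb0),
      mul_nonneg h1 (pow_nonneg ha0 4), mul_nonneg h1 (pow_nonneg hb0 4),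
      mul_nonneg h3 (pow_nonneg hb0 4), mul_nonneg h3 (pow_nonneg ha0 4),
      mul_nonneg (mul_nonneg h1 h1) (pow_nonneg ha0 3),
      mul_nonneg (mul_nonneg h1 h1) (mul_nonneg h1 h1),
      mul_nonneg (mul_nonneg h2 h2) (pow_nonneg hb0 3),
      mul_nonneg (mul_nonneg h3 h3) (pow_nonneg hb0 3),
      mul_nonneg (mul_nonneg h1 h2) (pow_nonneg hb0 3),
      mul_nonneg (mul_nonneg h1 h2) (pow_nonneg ha0 3)]
  nlinarith [mul_nonneg h3 hS.le]

lemma q1_lb_aux (a : ℝ) (h1 : 1 < a) (hpa : a^6 - a^4 - a^3 - 2*a^2 - a - 1 = 0) :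
    1.5 ≤ a := by
  by_contra hcon
  push_neg at hcon
  have hu : (0:ℝ) ≤ a - 1 := by linarith
  have hv : (0:ℝ) ≤ 1.5 - a := by linarith
  have ha : (0:ℝ) ≤ a := by linarith
  have : a^6 - a^4 - a^3 - 2*a^2 - a - 1 < 0 := by
    nlinarith [mul_nonneg hu hv, mul_nonneg (mul_nonneg hu hv) ha,
      mul_nonneg (mul_nonneg hu hv) (pow_nonneg ha 2),
      mul_nonneg (mul_nonneg hu hv) (pow_nonneg ha 3),
      mul_nonneg (mul_nonneg hu hv) (pow_nonneg ha 4)]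
  linarith

lemma q3_ub_aux (b : ℝ) (h1 : 1 < b) (h2 : b < 2) (hpb : b^5 - b^4 - b^3 - b + 1 = 0) :
    b ≤ 1.69 := by
  by_contra hcon
  push_neg at hcon
  have : b^5 - b^4 - b^3 - b + 1 > 0 := by
    nlinarith [sq_nonneg (b-1.69), pow_pos (by linarith : (0:ℝ) < b) 3,
      mul_nonneg (by linarith : (0:ℝ) ≤ b - 1.69) (by linarith : (0:ℝ) ≤ b - 1.69)]
  linarith

lemma y3_le_aux (q : ℝ) (h15 : 1.5 ≤ q) (h169 : q ≤ 1.69)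
    (hp : 0 ≤ q^6 - q^4 - q^3 - 2*q^2 - q - 1) :
    (∑ i ∈ Finset.Icc 1 3, (1/q)^(i+1)) + (1/q)^(3+2)/(1-(1/q)^2) ≤ (1 + q^3) / (q^4 - 1) := by
  have hq0 : (0:ℝ) < q := by linarith
  have hq1 : (1:ℝ) < q := by linarith
  have h2pos : (0:ℝ) < q^2 - 1 := by nlinarith
  have h4pos : (0:ℝ) < q^4 - 1 := by nlinarith
  have hicc : Finset.Icc 1 3 = ({1,2,3} : Finset ℕ) := rfl
  rw [hicc, Finset.sum_insert (by decide), Finset.sum_insert (by decide), Finset.sum_singleton]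
  rw [← sub_nonneg]
  have hne : (1:ℝ) - (1/q)^2 ≠ 0 := by
    have h : (1:ℝ) - (1/q)^2 = (q^2-1)/q^2 := by field_simp
    rw [h]; positivity
  have hid : (1 + q^3) / (q^4 - 1) - ((1/q)^(1+1) + ((1/q)^(2+1) + (1/q)^(3+1))
      + (1/q)^(3+2)/(1-(1/q)^2))
      = q*(q-1)*(q^6 - q^4 - q^3 - 2*q^2 - q - 1) / (q^5 * (q^4-1)) := by
    field_simp
    ring_nf
    field_simp
    ring
  rw [hid]
  apply div_nonneg _ (by positivity)
  exact mul_nonneg (mul_nonneg (by linarith) (by linarith)) hp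

lemma y4_gt_aux (q : ℝ) (h15 : 1.5 ≤ q) (h169 : q ≤ 1.69) :
    (∑ i ∈ Finset.Icc 1 4, (1/q)^(i+1)) + (1/q)^(4+2)/(1-(1/q)^2) > (1 + q^3) / (q^4 - 1) := by
  have hq0 : (0:ℝ) < q := by linarith
  have hq1 : (1:ℝ) < q := by linarith
  have h2pos : (0:ℝ) < q^2 - 1 := by nlinarith
  have h4pos : (0:ℝ) < q^4 - 1 := by nlinarith
  have hm : 0 < -q^8 + q^7 + q^6 + q^4 - q^2 - 1 := by
    have hu : (0:ℝ) ≤ q - 1.5 := by linarith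
    have hv : (0:ℝ) ≤ 1.69 - q := by linarith
    have hb : (0:ℝ) ≤ q := by linarith
    nlinarith [mul_nonneg hu hv, mul_nonneg (mul_nonneg hu hv) hb,
      mul_nonneg (mul_nonneg hu hv) (pow_nonneg hb 2),
      mul_nonneg (mul_nonneg hu hv) (pow_nonneg hb 3),
      mul_nonneg (mul_nonneg hu hv) (pow_nonneg hb 4),
      mul_nonneg (mul_nonneg hu hv) (pow_nonneg hb 5),
      mul_nonneg (mul_nonneg hu hv) (pow_nonneg hb 6)]
  have hicc : Finset.Icc 1 4 = ({1,2,3,4} : Finset ℕ) := rfl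
  rw [hicc, Finset.sum_insert (by decide), Finset.sum_insert (by decide),
    Finset.sum_insert (by decide), Finset.sum_singleton]
  rw [gt_iff_lt, ← sub_pos]
  have hne : (1:ℝ) - (1/q)^2 ≠ 0 := by
    have h : (1:ℝ) - (1/q)^2 = (q^2-1)/q^2 := by field_simp
    rw [h]; positivity
  have hid : ((1/q)^(1+1) + ((1/q)^(2+1) + ((1/q)^(3+1) + (1/q)^(4+1)))
      + (1/q)^(4+2)/(1-(1/q)^2)) - (1 + q^3) / (q^4 - 1)
      = q*(-q^8 + q^7 + q^6 + q^4 - q^2 - 1) / (q^6 * (q^4-1)) := by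
    field_simp
    ring_nf
    field_simp
    ring
  rw [hid]
  exact div_pos (mul_pos hq0 hm) (by positivity)

/-- for q ∈ [q₁,q₃], y_j ≤ (1+q³)/(q⁴-1) for 1 ≤ j ≤ 3 and > for j ≥ 4. -/
theorem yj_position (q1 q3 q : ℝ)
    (hq1 : q1 ∈ Set.Ioo (1:ℝ) 2 ∧ q1^6 - q1^4 - q1^3 - 2*q1^2 - q1 - 1 = 0)
    (hq3 : q3 ∈ Set.Ioo (1:ℝ) 2 ∧ q3^5 - q3^4 - q3^3 - q3 + 1 = 0)
    (hq : q ∈ Set.Icc q1 q3) :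
    (∀ j : ℕ, 1 ≤ j → j ≤ 3 → yExp q j ≤ (1 + q^3) / (q^4 - 1)) ∧
    (∀ j : ℕ, 4 ≤ j → yExp q j > (1 + q^3) / (q^4 - 1)) := by
  obtain ⟨⟨hq1a, hq1b⟩, hp1⟩ := hq1
  obtain ⟨⟨hq3a, hq3b⟩, hp3⟩ := hq3
  obtain ⟨hql, hqr⟩ := hq
  have hq1_lb : (1.5:ℝ) ≤ q1 := q1_lb_aux q1 hq1a hp1
  have hq3_ub : q3 ≤ (1.69:ℝ) := q3_ub_aux q3 hq3a hq3b hp3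
  have h15 : (1.5:ℝ) ≤ q := by linarith
  have h169 : q ≤ (1.69:ℝ) := by linarith
  have hq1' : (1:ℝ) < q := by linarith
  have hp1q : 0 ≤ q^6 - q^4 - q^3 - 2*q^2 - q - 1 :=
    p1_nonneg_aux q1 q hq1_lb hql (by linarith) hp1
  have hy3 : yExp q 3 ≤ (1 + q^3) / (q^4 - 1) := by
    rw [yExp_closed q hq1' 3]; exact y3_le_aux q h15 h169 hp1q
  have hy4 : yExp q 4 > (1 + q^3) / (q^4 - 1) := by
    rw [yExp_closed q hq1' 4]; exact y4_gt_aux q h15 h169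
  constructor
  · intro j h1j h3j
    interval_cases j
    · exact le_of_lt (lt_of_lt_of_le (lt_trans (yExp_mono q hq1' 1) (yExp_mono q hq1' 2)) hy3)
    · exact le_of_lt (lt_of_lt_of_le (yExp_mono q hq1' 2) hy3)
    · exact hy3
  · intro j h4j
    have : yExp q 4 ≤ yExp q j := by
      induction j, h4j using Nat.le_induction with
      | base => exact le_refl _
      | succ n hn ih => exact le_trans ih (le_of_lt (yExp_mono q hq1' n))
    exact lt_of_lt_of_le hy4 this
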